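/- Let M(z) = z + Σ_{n≥2} M_{n-1} z^n be a formal power series over a field of characteristic zero, and define the free cumulants F_n by the functional equation M(z) = z/(1 − z·F(M(z))), where F(z) = Σ_{n≥1} F_n z^{n-1}. Then for all n ≥ 2, F_n = −(1/(n−1)) · [z^1] (1/M(z)^{n−1}), where 1/M(z)^{n−1} is computed as a formal Laurent series. -/

import Mathlib

noncomputable section
open PowerSeries

/-- Hadamard (coefficientwise) product of formal power series. -/
def hadamard {R : Type*} [CommRing R] (f g : PowerSeries R) : PowerSeries R :=
  PowerSeries.mk fun n => (PowerSeries.coeff n f) * (PowerSeries.coeff n g)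
/-- For `H` with zero constant term, this is the composition
`C(H(z)) = Σ_{k≥1} C_k H(z)^{k-1}` of `C(z) = Σ_{k≥1} C_k z^{k-1}` with `H`. -/
def cser {K : Type*} [Field K] (C : ℕ → K) (H : PowerSeries K) : PowerSeries K :=
  PowerSeries.mk fun n =>
    ∑ k ∈ Finset.range (n + 1), C (k + 1) * PowerSeries.coeff n (H ^ k)

section Aux

variable {K : Type*} [Field K] [CharZero K]

/-- The key coefficient identity: if `M·v = X` then
`(j-1)·[zⁱ](vʲ M') = (j-1-i)·[zⁱ](v^{j-1})` for `j ≥ 2`, `i ≥ 1`. -/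
private lemma key_coeff (M v : PowerSeries K) (hMv : M * v = X) (a b : ℕ) :
    ((a : K) + 1) * coeff (b + 1) (v ^ (a + 2) * d⁄dX K M)
      = ((a : K) - b) * coeff (b + 1) (v ^ (a + 1)) := by
  have hD : v * d⁄dX K M = 1 - M * d⁄dX K v := by
    have := congrArg (d⁄dX K) hMv
    rw [Derivation.leibniz, derivative_X, smul_eq_mul, smul_eq_mul] at this
    linear_combination this
  have h1 : v ^ (a + 2) * d⁄dX K M = v ^ (a + 1) - X * (v ^ a * d⁄dX K v) := by
    have : v ^ (a + 2) * d⁄dX K M = v ^ (a + 1) * (v * d⁄dX K M) := by ring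
    rw [this, hD]
    have h2 : v ^ (a + 1) * M = X * v ^ a := by
      have : v ^ (a + 1) * M = (M * v) * v ^ a := by ring
      rw [this, hMv]
    calc v ^ (a + 1) * (1 - M * d⁄dX K v)
        = v ^ (a + 1) - (v ^ (a + 1) * M) * d⁄dX K v := by ring
      _ = v ^ (a + 1) - X * (v ^ a * d⁄dX K v) := by rw [h2]; ring
  have hpow : d⁄dX K (v ^ (a + 1)) = (a + 1) • (v ^ a * d⁄dX K v) := by
    have := Derivation.leibniz_pow (d⁄dX K) v (a + 1)
    simpa [smul_eq_mul] using this
  -- take coefficient (b+1)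
  have hc : coeff (b + 1) (v ^ (a + 2) * d⁄dX K M)
      = coeff (b + 1) (v ^ (a + 1)) - coeff b (v ^ a * d⁄dX K v) := by
    rw [h1, map_sub, coeff_succ_X_mul]
  have hc2 : ((a : K) + 1) * coeff b (v ^ a * d⁄dX K v)
      = coeff (b + 1) (v ^ (a + 1)) * ((b : K) + 1) := by
    have h := congrArg (coeff b) hpow
    rw [coeff_derivative, map_nsmul, nsmul_eq_mul] at h
    push_cast at h ⊢
    linear_combination -h
  rw [hc]
  push_cast
  linear_combination -hc2

private lemma coeff_jm1 (M v : PowerSeries K) (hMv : M * v = X) (a : ℕ) :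
    coeff (a + 1) (v ^ (a + 2) * d⁄dX K M) = 0 := by
  have h := key_coeff M v hMv a a
  rw [sub_self, zero_mul] at h
  have ha : ((a : K) + 1) ≠ 0 := by
    have : ((a + 1 : ℕ) : K) ≠ 0 := Nat.cast_ne_zero.mpr (Nat.succ_ne_zero a)
    push_cast at this; exact this
  exact (mul_eq_zero.mp h).resolve_left ha

private lemma coeff_c0 (M v : PowerSeries K) (hM1 : coeff 1 M = 1)
    (hv0 : coeff 0 v = 1) : coeff 0 (v * d⁄dX K M) = 1 := by
  have : coeff 0 (v * d⁄dX K M) = coeff 0 v * coeff 0 (d⁄dX K M) := by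
    rw [coeff_zero_eq_constantCoeff, map_mul]
  rw [this, hv0, coeff_derivative, hM1]
  norm_num

/-- Coefficients of `M^k` vanish below degree `k` when `M` has zero constant term. -/
private lemma coeff_pow_zero (M : PowerSeries K) (hM0 : coeff 0 M = 0)
    {m k : ℕ} (h : m < k) : coeff m (M ^ k) = 0 := by
  have hX : (X : PowerSeries K) ∣ M := X_dvd_iff.mpr (by rwa [← coeff_zero_eq_constantCoeff])
  have hXk : (X : PowerSeries K) ^ k ∣ M ^ k := pow_dvd_pow_of_dvd hX k
  exact (X_pow_dvd_iff.mp hXk) m h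

end Aux

theorem lagrange_free_cumulants {K : Type*} [Field K] [CharZero K]
    (F : ℕ → K) (M : PowerSeries K)
    (hM0 : PowerSeries.coeff 0 M = 0) (hM1 : PowerSeries.coeff 1 M = 1)
    -- the functional equation `M(z) = z / (1 - z·F(M(z)))`:
    (heq : M * (1 - PowerSeries.X * cser F M) = PowerSeries.X) :
    ∀ n : ℕ, 2 ≤ n →
      F n = -(1 / ((n : K) - 1)) * ((1 / ((M : LaurentSeries K)) ^ (n - 1)).coeff 1) := by
  intro n hn
  obtain ⟨c, rfl⟩ : ∃ c, n = c + 2 := ⟨n - 2, by omega⟩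
  set G : PowerSeries K := cser F M with hG
  set v : PowerSeries K := 1 - PowerSeries.X * G with hv
  have hMv : M * v = X := heq
  have hv0 : coeff 0 v = 1 := by
    rw [hv, map_sub, coeff_zero_eq_constantCoeff, map_mul]
    simp
  set A : PowerSeries K := v ^ (c + 2) * d⁄dX K M with hA
  -- Step 1: coeff (c+1) (M^k * A) = δ_{k, c+1} for k ≤ c+1
  have hdelta : ∀ k : ℕ, k ≤ c + 1 →
      coeff (c + 1) (M ^ k * A) = if k = c + 1 then 1 else 0 := by
    intro k hk
    have hsplit : M ^ k * A = X ^ k * (v ^ (c + 2 - k) * d⁄dX K M) := by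
      rw [hA]
      have h1 : M ^ k * v ^ (c + 2) = X ^ k * v ^ (c + 2 - k) := by
        have h2 : v ^ (c + 2) = v ^ k * v ^ (c + 2 - k) := by
          rw [← pow_add]; congr 1; omega
        rw [h2, ← mul_assoc, ← mul_pow, hMv]
      rw [← mul_assoc, h1, mul_assoc]
    rw [hsplit]
    have hco : coeff (c + 1) (X ^ k * (v ^ (c + 2 - k) * d⁄dX K M))
        = coeff (c + 1 - k) (v ^ (c + 2 - k) * d⁄dX K M) := by
      rw [coeff_X_pow_mul']
      rw [if_pos (by omega)]
    rw [hco]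
    by_cases hkc : k = c + 1
    · subst hkc
      simp only [Nat.sub_self, Nat.add_sub_cancel_left, if_true]
      have : c + 2 - (c + 1) = 1 := by omega
      rw [this, pow_one]
      exact coeff_c0 M v hM1 hv0
    · rw [if_neg hkc]
      have hklt : k < c + 1 := lt_of_le_of_ne hk hkc
      obtain ⟨a, ha⟩ : ∃ a, c + 1 - k = a + 1 := ⟨c - k, by omega⟩
      have h2 : c + 2 - k = a + 2 := by omega
      rw [ha, h2]
      exact coeff_jm1 M v hMv a
  -- Step 2: coeff (c+1) (G * A) = F (c+2)
  have hGA : coeff (c + 1) (G * A) = F (c + 2) := by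
    set P : PowerSeries K := ∑ k ∈ Finset.range (c + 2), C (F (k + 1)) * M ^ k with hP
    have hagree : ∀ m : ℕ, m ≤ c + 1 → coeff m G = coeff m P := by
      intro m hm
      rw [hG, hP]
      simp only [cser, coeff_mk, map_sum, coeff_C_mul]
      rw [← Finset.sum_range_add_sum_Ico _ (by omega : m + 1 ≤ c + 2)]
      have : ∑ k ∈ Finset.Ico (m + 1) (c + 2), F (k + 1) * coeff m (M ^ k) = 0 := by
        apply Finset.sum_eq_zero
        intro k hk
        rw [coeff_pow_zero M hM0 (by exact (Finset.mem_Ico.mp hk).1), mul_zero]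
      rw [this, add_zero]
    have hmuleq : coeff (c + 1) (G * A) = coeff (c + 1) (P * A) := by
      rw [coeff_mul, coeff_mul]
      apply Finset.sum_congr rfl
      intro p hp
      rw [Finset.HasAntidiagonal.mem_antidiagonal] at hp
      rw [hagree p.1 (by omega)]
    rw [hmuleq, hP, Finset.sum_mul, map_sum]
    have heach : ∀ k ∈ Finset.range (c + 2),
        coeff (c + 1) (C (F (k + 1)) * M ^ k * A)
          = if k = c + 1 then F (c + 2) else 0 := by
      intro k hk
      rw [Finset.mem_range] at hk
      rw [mul_assoc, coeff_C_mul, hdelta k (by omega)]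
      by_cases hkc : k = c + 1
      · subst hkc; simp
      · simp [hkc]
    rw [Finset.sum_congr rfl heach, Finset.sum_ite_eq' (Finset.range (c + 2)) (c + 1)]
    simp
  -- Step 3: X * (G * A) = A - v * A
  have hXGA : X * (G * A) = A - v * A := by
    have : X * G = 1 - v := by rw [hv]; ring
    calc X * (G * A) = (X * G) * A := by ring
      _ = (1 - v) * A := by rw [this]
      _ = A - v * A := by ring
  -- coeff (c+2) of both sides
  have hcoeffX : coeff (c + 2) (X * (G * A)) = F (c + 2) := by
    rw [show c + 2 = (c + 1) + 1 from rfl, coeff_succ_X_mul, hGA]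
  have hvA : v * A = v ^ (c + 3) * d⁄dX K M := by rw [hA]; ring
  have hvA0 : coeff (c + 2) (v * A) = 0 := by
    rw [hvA]
    exact coeff_jm1 M v hMv (c + 1)
  -- coeff (c+2) A via key_coeff with a = c, b = c+1
  have hkey : ((c : K) + 1) * coeff (c + 2) A = - coeff (c + 2) (v ^ (c + 1)) := by
    have h := key_coeff M v hMv c (c + 1)
    rw [hA]
    push_cast at h ⊢
    linear_combination h
  have hne : ((c : K) + 1) ≠ 0 := by
    have : ((c + 1 : ℕ) : K) ≠ 0 := Nat.cast_ne_zero.mpr (Nat.succ_ne_zero c)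
    push_cast at this; exact this
  have hF : F (c + 2) = -(1 / ((c : K) + 1)) * coeff (c + 2) (v ^ (c + 1)) := by
    have h1 : F (c + 2) = coeff (c + 2) A := by
      rw [← hcoeffX, hXGA, map_sub, hvA0, sub_zero]
    rw [h1]
    field_simp
    linear_combination hkey
  -- Step 4: Laurent series part
  have hLaur : (1 / ((M : LaurentSeries K)) ^ (c + 2 - 1)).coeff 1
      = coeff (c + 2) (v ^ (c + 1)) := by
    have hinv : (1 : LaurentSeries K) / ((M : LaurentSeries K)) ^ (c + 1)
        = ((v ^ (c + 1) : PowerSeries K) : LaurentSeries K)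
            * HahnSeries.single (-(c + 1) : ℤ) (1 : K) := by
      symm
      apply eq_one_div_of_mul_eq_one_left
      have h1 : ((v ^ (c + 1) : PowerSeries K) : LaurentSeries K)
            * HahnSeries.single (-(c + 1) : ℤ) (1 : K) * ((M : LaurentSeries K)) ^ (c + 1)
          = (((M * v) ^ (c + 1) : PowerSeries K) : LaurentSeries K)
            * HahnSeries.single (-(c + 1) : ℤ) (1 : K) := by
        rw [mul_pow]
        push_cast [PowerSeries.coe_mul, PowerSeries.coe_pow]
        ring
      rw [h1, hMv, HahnSeries.ofPowerSeries_X_pow, HahnSeries.single_mul_single, one_mul]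
      rw [show ((c + 1 : ℕ) : ℤ) + (-(c + 1) : ℤ) = 0 by push_cast; ring]
      exact HahnSeries.single_zero_one
    have hsub : c + 2 - 1 = c + 1 := rfl
    rw [hsub, hinv]
    have h2 := HahnSeries.coeff_mul_single_add (Γ := ℤ) (R := K)
      (r := (1 : K)) (x := ((v ^ (c + 1) : PowerSeries K) : LaurentSeries K))
      (a := ((c + 2 : ℕ) : ℤ)) (b := (-(c + 1) : ℤ))
    rw [mul_one, LaurentSeries.coeff_coe_powerSeries] at h2
    rw [show ((c + 2 : ℕ) : ℤ) + (-(c + 1) : ℤ) = 1 by push_cast; ring] at h2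
    exact h2
  rw [hLaur, hF]
  push_cast
  ring_nf
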